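/- Let n be a positive integer and let e + b ⊂ M(n) be the affine subspace of matrices whose subdiagonal entries are all −1, whose entries below the subdiagonal are 0, and whose entries on and above the diagonal are arbitrary. Then every x ∈ e + b is strongly regular; that is, the (Fréchet) derivative of Φ_n at x is a surjective linear map from M(n) onto ℂ^{d(n)}. -/

import Mathlib

open Matrix Polynomial

noncomputable section

attribute [local instance] Matrix.normedAddCommGroup Matrix.normedSpace

def d (k : ℕ) : ℕ := k * (k + 1) / 2

def cutoff {n : ℕ} (x : Matrix (Fin n) (Fin n) ℂ) {m : ℕ} (h : m ≤ n) :
    Matrix (Fin m) (Fin m) ℂ :=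
  Matrix.of fun i j => x (Fin.castLE h i) (Fin.castLE h j)

def Phi (n : ℕ) (x : Matrix (Fin n) (Fin n) ℂ) : (Σ m : Fin n, Fin (m.1 + 1)) → ℂ :=
  fun p => (-1 : ℂ) ^ (p.1.1 - p.2.1 + 1) * ((cutoff x p.1.2).charpoly.coeff p.2.1)

def StronglyRegular {n : ℕ} (x : Matrix (Fin n) (Fin n) ℂ) : Prop :=
  Function.Surjective (fderiv ℂ (Phi n) x)

def InEB {n : ℕ} (x : Matrix (Fin n) (Fin n) ℂ) : Prop :=
  (∀ i j : Fin n, i.1 = j.1 + 1 → x i j = -1) ∧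
  (∀ i j : Fin n, j.1 + 1 < i.1 → x i j = 0)

def EigDisjoint {n : ℕ} (x : Matrix (Fin n) (Fin n) ℂ) : Prop :=
  (∀ (m : ℕ) (_ : 1 ≤ m) (hm : m ≤ n), (cutoff x hm).charpoly.roots.toFinset.card = m) ∧
  (∀ (m : ℕ) (_ : 1 ≤ m) (hm : m + 1 ≤ n) (z : ℂ),
    ¬((cutoff x (Nat.le_of_succ_le hm)).charpoly.IsRoot z ∧
      (cutoff x hm).charpoly.IsRoot z))

def embed {n m : ℕ} (h : m ≤ n) (y : Matrix (Fin m) (Fin m) ℂ) :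
    Matrix (Fin n) (Fin n) ℂ :=
  Matrix.of fun i j =>
    if hi : i.1 < m then if hj : j.1 < m then y ⟨i.1, hi⟩ ⟨j.1, hj⟩ else 0 else 0

def GSet {n : ℕ} (x : Matrix (Fin n) (Fin n) ℂ) {m : ℕ} (h : m ≤ n) :
    Set (Matrix (Fin n) (Fin n) ℂ) :=
  {g | IsUnit g ∧
    (∀ i j : Fin n, m ≤ i.1 ∨ m ≤ j.1 → g i j = (1 : Matrix (Fin n) (Fin n) ℂ) i j) ∧
    cutoff g h ∈ Submodule.span ℂ (Set.range fun k : ℕ => (cutoff x h) ^ k)}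

def centSubmodule {n : ℕ} (x : Matrix (Fin n) (Fin n) ℂ) :
    Submodule ℂ (Matrix (Fin n) (Fin n) ℂ) where
  carrier := {y | x * y = y * x}
  add_mem' := fun {a b} ha hb => by
    simp only [Set.mem_setOf_eq] at *
    rw [mul_add, add_mul, ha, hb]
  zero_mem' := by simp
  smul_mem' := fun c a ha => by
    simp only [Set.mem_setOf_eq] at *
    rw [mul_smul_comm, smul_mul_assoc, ha]

def Zsub {n : ℕ} (x : Matrix (Fin n) (Fin n) ℂ) {m : ℕ} (h : m ≤ n) :
    Submodule ℂ (Matrix (Fin n) (Fin n) ℂ) :=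
  Submodule.span ℂ (Set.range fun k : ℕ => embed h ((cutoff x h) ^ k))

def IsJacobi {n : ℕ} (x : Matrix (Fin n) (Fin n) ℂ) : Prop :=
  (∀ i j : Fin n, (i.1 + 1 < j.1 ∨ j.1 + 1 < i.1) → x i j = 0) ∧
  (∀ i j : Fin n, (i.1 + 1 = j.1 ∨ j.1 + 1 = i.1) → x i j ≠ 0)


/-! ### Auxiliary lemmas -/

theorem stdb_apply {m n : Type*} [DecidableEq m] [DecidableEq n] {α : Type*} [Zero α]
    (i : m) (j : n) (a : α) (i' : m) (j' : n) :
    Matrix.single i j a i' j' = if i = i' ∧ j = j' then a else 0 := rfl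

theorem det1 {sz : ℕ} {S : Type*} [CommRing S] (P : Matrix (Fin sz) (Fin sz) S)
    (r s : Fin sz) (u : S) :
    (P + Matrix.single r s u).det = P.det + u * (adjugate P) s r := by
  have h1 : P + Matrix.single r s u = P.updateRow r (P r + Pi.single s u) := by
    ext i j
    by_cases hi : i = r
    · subst hi
      simp [Matrix.updateRow_self, Matrix.single, Pi.single_apply, eq_comm, and_comm]
    · simp only [Matrix.add_apply, Matrix.updateRow_ne hi, Matrix.single, Matrix.of_apply]
      rw [if_neg (by tauto), add_zero]
  have h2 : (Pi.single s u : Fin sz → S) = u • (Pi.single s 1 : Fin sz → S) := by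
    ext j; by_cases hj : j = s <;> simp [Pi.single_apply, hj]
  rw [h1, Matrix.det_updateRow_add, Matrix.updateRow_eq_self, h2,
    Matrix.det_updateRow_smul, Matrix.adjugate_apply]

theorem core {sz : ℕ} (A : Matrix (Fin sz) (Fin sz) ℂ) (r s : Fin sz) (t : ℂ) (k : ℕ) :
    ((A + t • Matrix.single r s 1).charpoly).coeff k =
      A.charpoly.coeff k - t * ((adjugate (charmatrix A)) s r).coeff k := by
  have hsm : t • Matrix.single r s (1:ℂ) = Matrix.single r s t := by
    rw [Matrix.smul_single, smul_eq_mul, mul_one]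
  have hch : charmatrix (A + Matrix.single r s t)
      = charmatrix A + Matrix.single r s (-(C t)) := by
    ext i j : 2
    by_cases hij : i = j
    · subst hij
      rw [Matrix.add_apply, charmatrix_apply_eq, charmatrix_apply_eq, Matrix.add_apply,
        stdb_apply, stdb_apply]
      split
      · rw [map_add]; ring
      · rw [add_zero, add_zero]
    · rw [Matrix.add_apply, charmatrix_apply_ne _ _ _ hij, charmatrix_apply_ne _ _ _ hij,
        Matrix.add_apply, stdb_apply, stdb_apply]
      split
      · rw [map_add]; ring
      · rw [add_zero, add_zero]
  rw [hsm, Matrix.charpoly, hch, det1 (charmatrix A) r s (-(C t)), Polynomial.coeff_add,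
    ← Matrix.charpoly, neg_mul, Polynomial.coeff_neg, Polynomial.coeff_C_mul]
  ring

theorem succAbove_val {m : ℕ} (r : Fin (m + 1)) (a : Fin m) :
    ((r.succAbove a : Fin (m + 1)) : ℕ) = if a.1 < r.1 then a.1 else a.1 + 1 := by
  by_cases h : a.1 < r.1
  · rw [Fin.succAbove_of_castSucc_lt r a (by rwa [Fin.lt_def, Fin.coe_castSucc]),
      if_pos h, Fin.coe_castSucc]
  · rw [Fin.succAbove_of_le_castSucc r a (by rw [Fin.le_def, Fin.coe_castSucc]; omega),
      if_neg h, Fin.val_succ]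

theorem detLastRow {s : ℕ} {S : Type*} [CommRing S] (B : Matrix (Fin (s + 1)) (Fin (s + 1)) S)
    (h : B (Fin.last s) = Pi.single (Fin.last s) 1) :
    B.det = (B.submatrix Fin.castSucc Fin.castSucc).det := by
  rw [Matrix.det_succ_row B (Fin.last s), Finset.sum_eq_single (Fin.last s)]
  · rw [h, Pi.single_eq_same, Fin.succAbove_last, Fin.val_last]
    rw [show (-1 : S) ^ (s + s) = 1 from Even.neg_one_pow ⟨s, rfl⟩]
    ring
  · intro b _ hb
    rw [h, Pi.single_eq_of_ne hb, mul_zero, zero_mul]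
  · intro hmem; exact absurd (Finset.mem_univ _) hmem

theorem cm_cutoff {n m : ℕ} (x : Matrix (Fin n) (Fin n) ℂ) (h : m ≤ n) :
    charmatrix (cutoff x h) = (charmatrix x).submatrix (Fin.castLE h) (Fin.castLE h) := by
  ext i j : 2
  by_cases hij : i = j
  · subst hij
    rw [charmatrix_apply_eq, Matrix.submatrix_apply, charmatrix_apply_eq]
    rfl
  · rw [charmatrix_apply_ne _ _ _ hij, Matrix.submatrix_apply,
      charmatrix_apply_ne _ _ _ (fun hc => hij (Fin.castLE_injective h hc))]
    rfl

theorem charm_congr {n : ℕ} (x : Matrix (Fin n) (Fin n) ℂ) {i i' j j' : Fin n}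
    (hi : i.1 = i'.1) (hj : j.1 = j'.1) : charmatrix x i j = charmatrix x i' j' := by
  rw [Fin.ext hi, Fin.ext hj]

theorem cmx_one {n : ℕ} {x : Matrix (Fin n) (Fin n) ℂ} (hx : InEB x) (u v : Fin n)
    (h : u.1 = v.1 + 1) : charmatrix x u v = 1 := by
  rw [charmatrix_apply_ne _ _ _ (by intro hc; rw [hc] at h; omega), hx.1 u v h]
  simp

theorem cmx_zero {n : ℕ} {x : Matrix (Fin n) (Fin n) ℂ} (hx : InEB x) (u v : Fin n)
    (h : v.1 + 1 < u.1) : charmatrix x u v = 0 := by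
  rw [charmatrix_apply_ne _ _ _ (by intro hc; rw [hc] at h; omega), hx.2 u v h]
  simp

def rIdx (j a : ℕ) : ℕ := if a < j then a else a + 1

theorem rIdx_lt {j a t n : ℕ} (ha : a < t) (ht : t < n) : rIdx j a < n := by
  unfold rIdx; split <;> omega

def Dm {n : ℕ} (x : Matrix (Fin n) (Fin n) ℂ) (j t : ℕ) (ht : t < n) (hjt : j ≤ t) :
    Matrix (Fin t) (Fin t) ℂ[X] :=
  Matrix.of fun a b =>
    charmatrix x ⟨rIdx j a.1, rIdx_lt a.2 ht⟩ ⟨b.1, by have := b.2; omega⟩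

theorem Dm_step {n : ℕ} {x : Matrix (Fin n) (Fin n) ℂ} (hx : InEB x) {j t : ℕ}
    (hjt : j ≤ t) (ht : t + 1 < n) :
    (Dm x j (t + 1) ht (by omega)).det = (Dm x j t (by omega) hjt).det := by
  have hrow : (Dm x j (t + 1) ht (by omega)) (Fin.last t) = Pi.single (Fin.last t) 1 := by
    funext b
    have hu : rIdx j ((Fin.last t) : ℕ) = t + 1 := by
      unfold rIdx; rw [Fin.val_last]; split <;> omega
    show charmatrix x _ _ = _
    by_cases hbt : b.1 = t
    · rw [cmx_one hx _ _ (by rw [show ((⟨rIdx j ((Fin.last t) : ℕ),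
        rIdx_lt (Fin.last t).2 ht⟩ : Fin n) : ℕ) = t + 1 from hu, hbt])]
      rw [show b = Fin.last t from Fin.ext hbt, Pi.single_eq_same]
    · rw [cmx_zero hx _ _ (by simp only [hu]; have := b.2; omega)]
      rw [Pi.single_eq_of_ne (by intro hc; exact hbt (by simpa using congrArg Fin.val hc))]
  rw [detLastRow _ hrow]
  congr 1

theorem Dm_base {n : ℕ} (x : Matrix (Fin n) (Fin n) ℂ) {j : ℕ} (hj : j < n) :
    Dm x j j hj (le_refl j) = charmatrix (cutoff x hj.le) := by
  rw [cm_cutoff]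
  refine Matrix.ext fun a b => ?_
  refine charm_congr x ?_ ?_
  · simp [rIdx, a.2]
  · simp

theorem Dm_det {n : ℕ} {x : Matrix (Fin n) (Fin n) ℂ} (hx : InEB x) {j : ℕ} :
    ∀ t (ht : t < n) (hjt : j ≤ t),
      (Dm x j t ht hjt).det = (cutoff x (show j ≤ n by omega)).charpoly := by
  intro t
  induction t with
  | zero =>
      intro ht hjt
      have hj0 : j = 0 := by omega
      subst hj0
      rw [Dm_base x ht]
      rfl
  | succ t ih =>
      intro ht hjt
      rcases Nat.lt_or_ge j (t + 1) with hlt | hge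
      · rw [Dm_step hx (by omega) ht, ih (by omega) (by omega)]
      · have hj : j = t + 1 := by omega
        subst hj
        rw [Dm_base x ht]
        rfl

theorem adj_last {n : ℕ} {x : Matrix (Fin n) (Fin n) ℂ} (hx : InEB x) {m : ℕ}
    (h : m + 1 ≤ n) (r : Fin (m + 1)) :
    adjugate (charmatrix (cutoff x h)) (Fin.last m) r
      = (-1 : ℂ[X]) ^ (r.1 + m) * (cutoff x (show (r.1 : ℕ) ≤ n by omega)).charpoly := by
  rw [Matrix.adjugate_apply, Matrix.det_succ_row _ r, Finset.sum_eq_single (Fin.last m)]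
  · have h1 : (charmatrix (cutoff x h)).updateRow r (Pi.single (Fin.last m) 1) r (Fin.last m)
        = 1 := by
      rw [Matrix.updateRow_self, Pi.single_eq_same]
    rw [h1, mul_one, Fin.val_last]
    congr 1
    have h2 : ((charmatrix (cutoff x h)).updateRow r (Pi.single (Fin.last m) 1)).submatrix
        r.succAbove (Fin.last m).succAbove
        = Dm x r.1 m (by omega) (by omega) := by
      refine Matrix.ext fun a b => ?_
      rw [Matrix.submatrix_apply, Matrix.updateRow_ne (Fin.succAbove_ne r a),
        Fin.succAbove_last, cm_cutoff, Matrix.submatrix_apply]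
      refine charm_congr x ?_ ?_
      · simp [succAbove_val, rIdx]
      · simp
    rw [h2, Dm_det hx m (by omega) (by omega)]
  · intro c _ hc
    rw [Matrix.updateRow_self, Pi.single_eq_of_ne hc, mul_zero, zero_mul]
  · intro hmem; exact absurd (Finset.mem_univ _) hmem

/-! ### Differentiability of `Phi` -/

def entryLM {n : ℕ} (a b : Fin n) : Matrix (Fin n) (Fin n) ℂ →ₗ[ℂ] ℂ where
  toFun y := y a b
  map_add' _ _ := rfl
  map_smul' _ _ := rfl

theorem diff_entry {n : ℕ} (a b : Fin n) :
    Differentiable ℂ (fun y : Matrix (Fin n) (Fin n) ℂ => y a b) :=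
  (LinearMap.toContinuousLinearMap (entryLM a b)).differentiable

theorem diff_eval {n M : ℕ} (g : Fin M × Fin M → Fin n × Fin n)
    (P : MvPolynomial (Fin M × Fin M) ℂ) :
    Differentiable ℂ (fun y : Matrix (Fin n) (Fin n) ℂ =>
      MvPolynomial.eval (fun ij => y (g ij).1 (g ij).2) P) := by
  induction P using MvPolynomial.induction_on with
  | C a => simpa using differentiable_const a
  | add p q hp hq => simp only [map_add]; exact hp.add hq
  | mul_X p i hp =>
    simp only [_root_.map_mul, MvPolynomial.eval_X]; exact hp.mul (diff_entry (g i).1 (g i).2)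

theorem charpoly_coeff_eq_eval {M : ℕ} (A : Matrix (Fin M) (Fin M) ℂ) (k : ℕ) :
    A.charpoly.coeff k
      = MvPolynomial.eval (fun ij : Fin M × Fin M => A ij.1 ij.2)
          ((Matrix.charpoly.univ ℂ (Fin M)).coeff k) := by
  have h := Matrix.charpoly.univ_coeff_eval₂Hom (Fin M) (RingHom.id ℂ)
    (fun ij : Fin M × Fin M => A ij.1 ij.2) k
  rw [show Matrix.of (Function.curry fun ij : Fin M × Fin M => A ij.1 ij.2) = A from rfl] at h
  rw [← h]
  rfl

theorem Phi_comp_eq (n : ℕ) (q : Σ m : Fin n, Fin (m.1 + 1)) :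
    (fun y : Matrix (Fin n) (Fin n) ℂ => Phi n y q)
      = fun y => (-1 : ℂ) ^ (q.1.1 - q.2.1 + 1) *
          MvPolynomial.eval
            (fun ij : Fin (q.1.1 + 1) × Fin (q.1.1 + 1) =>
              y (Fin.castLE q.1.2 ij.1) (Fin.castLE q.1.2 ij.2))
            ((Matrix.charpoly.univ ℂ (Fin (q.1.1 + 1))).coeff q.2.1) := by
  funext y
  rw [Phi, charpoly_coeff_eq_eval]
  rfl

theorem Phi_diffAt {n : ℕ} (x : Matrix (Fin n) (Fin n) ℂ) :
    DifferentiableAt ℂ (Phi n) x := by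
  rw [show Phi n = fun y q => Phi n y q from rfl]
  refine differentiableAt_pi.2 fun q => ?_
  rw [show (fun y => Phi n y q) = _ from Phi_comp_eq n q]
  exact ((diff_eval (fun ij => (Fin.castLE q.1.2 ij.1, Fin.castLE q.1.2 ij.2))
    ((Matrix.charpoly.univ ℂ (Fin (q.1.1 + 1))).coeff q.2.1)).const_mul _) x

theorem curve_deriv {n : ℕ} (x v : Matrix (Fin n) (Fin n) ℂ) (q : Σ m : Fin n, Fin (m.1 + 1)) :
    HasDerivAt (fun t : ℂ => Phi n (x + t • v) q) (fderiv ℂ (Phi n) x v q) 0 := by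
  have hγ : HasDerivAt (fun t : ℂ => x + t • v) v 0 := by
    have h := ((hasDerivAt_id' (0 : ℂ)).smul_const v).const_add x
    rwa [one_smul] at h
  have h0 : x + (0 : ℂ) • v = x := by simp
  have hc : HasDerivAt (fun t : ℂ => Phi n (x + t • v)) (fderiv ℂ (Phi n) x v) 0 := by
    have hP := (Phi_diffAt x).hasFDerivAt
    rw [← h0] at hP
    have h := hP.comp_hasDerivAt 0 hγ
    simp only [Function.comp_def, h0] at h
    exact h
  exact hasDerivAt_pi.1 hc q

/-! ### Spanning from triangularity -/

theorem span_triangular {ι : Type*} [Fintype ι] [DecidableEq ι] (key : ι → ℕ)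
    (hinj : Function.Injective key) (u : ι → (ι → ℂ))
    (hdiag : ∀ p, u p p ≠ 0) (hzero : ∀ p q, key q < key p → u p q = 0) :
    ∀ w : ι → ℂ, w ∈ Submodule.span ℂ (Set.range u) := by
  set S := Submodule.span ℂ (Set.range u) with hS
  set B := Finset.univ.sup key with hB
  have hkey : ∀ p : ι, key p ≤ B := fun p => Finset.le_sup (Finset.mem_univ p)
  have main : ∀ c : ℕ, ∀ p : ι, B < key p + c → (Pi.single p 1 : ι → ℂ) ∈ S := by
    intro c
    induction c with
    | zero => intro p hp; exact absurd hp (by have := hkey p; omega)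
    | succ c ih =>
        intro p hp
        have hu : u p ∈ S := Submodule.subset_span ⟨p, rfl⟩
        have hsum : (u p p) • (Pi.single p 1 : ι → ℂ)
            = u p - ∑ q ∈ Finset.univ.erase p, u p q • (Pi.single q 1 : ι → ℂ) := by
          funext r
          simp only [Pi.sub_apply, Pi.smul_apply, Finset.sum_apply, Pi.single_apply,
            smul_eq_mul, mul_ite, mul_one, mul_zero]
          by_cases hr : r = p
          · subst hr
            rw [Finset.sum_eq_zero (fun q hq => by
              rw [if_neg (fun hc : r = q => (Finset.mem_erase.1 hq).1 hc.symm)])]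
            simp
          · rw [if_neg hr, Finset.sum_eq_single r]
            · rw [if_pos rfl]
              simp [Pi.sub_apply]
            · intro q _ hq
              rw [if_neg (fun hc : r = q => hq hc.symm)]
            · intro hmem
              exact absurd (Finset.mem_erase.2 ⟨hr, Finset.mem_univ r⟩) hmem
        have hmem : (u p p) • (Pi.single p 1 : ι → ℂ) ∈ S := by
          rw [hsum]
          refine Submodule.sub_mem S hu (Submodule.sum_mem S fun q hq => ?_)
          by_cases hz : u p q = 0
          · rw [hz, zero_smul]; exact Submodule.zero_mem S
          · refine Submodule.smul_mem S _ (ih q ?_)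
            have hne : q ≠ p := (Finset.mem_erase.1 hq).1
            have h1 : ¬ key q < key p := fun hlt => hz (hzero p q hlt)
            have h2 : key q ≠ key p := fun hc => hne (hinj hc)
            omega
        have := Submodule.smul_mem S (u p p)⁻¹ hmem
        rwa [smul_smul, inv_mul_cancel₀ (hdiag p), one_smul] at this
  intro w
  have hw : w = ∑ q : ι, w q • (Pi.single q 1 : ι → ℂ) := by
    funext r
    simp [Pi.single_apply, mul_ite, Finset.sum_ite_eq' Finset.univ r w]
  rw [hw]
  exact Submodule.sum_mem _ fun q _ => Submodule.smul_mem _ _ (main (B + 1) q (by omega))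

/-! ### Cutoff lemmas -/

theorem cutoff_add_smul {n m : ℕ} (x v : Matrix (Fin n) (Fin n) ℂ) (t : ℂ) (h : m ≤ n) :
    cutoff (x + t • v) h = cutoff x h + t • cutoff v h := rfl

theorem cutoff_stdBasis_eq {n m : ℕ} (h : m + 1 ≤ n) (R S : Fin n)
    (hR : R.1 < m + 1) (hS : S.1 < m + 1) :
    cutoff (Matrix.single R S (1 : ℂ)) h
      = Matrix.single (⟨R.1, hR⟩ : Fin (m + 1)) (⟨S.1, hS⟩ : Fin (m + 1)) 1 := by
  refine Matrix.ext fun i j => ?_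
  rw [show cutoff (Matrix.single R S (1 : ℂ)) h i j
    = Matrix.single R S (1 : ℂ) (Fin.castLE h i) (Fin.castLE h j) from rfl,
    stdb_apply, stdb_apply]
  refine if_congr ?_ rfl rfl
  constructor
  · rintro ⟨h1, h2⟩
    exact ⟨Fin.ext (by simpa using congrArg Fin.val h1),
      Fin.ext (by simpa using congrArg Fin.val h2)⟩
  · rintro ⟨h1, h2⟩
    exact ⟨Fin.ext (by simpa using (congrArg Fin.val h1).symm ▸ rfl), by
      refine Fin.ext ?_
      have := congrArg Fin.val h2
      simpa using this⟩

theorem cutoff_stdBasis_zero {n m : ℕ} (h : m + 1 ≤ n) (R S : Fin n)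
    (hS : ¬ S.1 < m + 1) :
    cutoff (Matrix.single R S (1 : ℂ)) h = 0 := by
  refine Matrix.ext fun i j => ?_
  rw [show cutoff (Matrix.single R S (1 : ℂ)) h i j
    = Matrix.single R S (1 : ℂ) (Fin.castLE h i) (Fin.castLE h j) from rfl,
    stdb_apply]
  rw [if_neg, Matrix.zero_apply]
  rintro ⟨-, h2⟩
  have := congrArg Fin.val h2
  simp at this
  omega


/-! ### Derivative components -/

def dirV {n : ℕ} (p : Σ m : Fin n, Fin (m.1 + 1)) : Matrix (Fin n) (Fin n) ℂ :=
  Matrix.single (⟨p.2.1, by have := p.2.2; have := p.1.2; omega⟩ : Fin n) p.1 1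

theorem comp_kill {n : ℕ} (x : Matrix (Fin n) (Fin n) ℂ)
    (p q : Σ m : Fin n, Fin (m.1 + 1)) (hlt : q.1.1 < p.1.1) :
    fderiv ℂ (Phi n) x (dirV p) q = 0 := by
  have hcurve := curve_deriv x (dirV p) q
  have hconst : (fun t : ℂ => Phi n (x + t • dirV p) q) = fun _ => Phi n x q := by
    funext t
    have hc0 : cutoff (dirV p) q.1.2 = 0 := by
      simp only [dirV]
      exact cutoff_stdBasis_zero q.1.2 _ _ (by omega)
    have hc : cutoff (x + t • dirV p) q.1.2 = cutoff x q.1.2 := by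
      rw [cutoff_add_smul, hc0, smul_zero, add_zero]
    simp only [Phi]
    rw [hc]
  rw [hconst] at hcurve
  exact ((hasDerivAt_const (0 : ℂ) (Phi n x q)).unique hcurve).symm

theorem comp_main {n : ℕ} {x : Matrix (Fin n) (Fin n) ℂ} (hx : InEB x)
    (m : Fin n) (k k' : Fin (m.1 + 1)) :
    fderiv ℂ (Phi n) x (dirV ⟨m, k⟩) ⟨m, k'⟩
      = -((-1 : ℂ) ^ (m.1 - k'.1 + 1) * ((-1 : ℂ) ^ (k.1 + m.1) *
          (cutoff x (show (k.1 : ℕ) ≤ n by have := k.2; have := m.2; omega)).charpoly.coeff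
            k'.1)) := by
  have hkn : (k.1 : ℕ) ≤ n := by have := k.2; have := m.2; omega
  have hcurve := curve_deriv x (dirV ⟨m, k⟩) ⟨m, k'⟩
  set A := cutoff x (show m.1 + 1 ≤ n from m.2) with hA
  set b : ℂ := (-1 : ℂ) ^ (k.1 + m.1) * (cutoff x hkn).charpoly.coeff k'.1 with hb
  have hadj : ((adjugate (charmatrix A)) (⟨m.1, by omega⟩ : Fin (m.1 + 1))
      (⟨k.1, k.2⟩ : Fin (m.1 + 1))).coeff k'.1 = b := by
    have hlast : (⟨m.1, by omega⟩ : Fin (m.1 + 1)) = Fin.last m.1 := rfl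
    rw [hlast, adj_last hx m.2 (⟨k.1, k.2⟩ : Fin (m.1 + 1)),
      show (-1 : ℂ[X]) = C (-1 : ℂ) from by simp, ← map_pow, Polynomial.coeff_C_mul]
  have hfun : (fun t : ℂ => Phi n (x + t • dirV ⟨m, k⟩) ⟨m, k'⟩)
      = fun t => (-1 : ℂ) ^ (m.1 - k'.1 + 1) * (A.charpoly.coeff k'.1 - t * b) := by
    funext t
    simp only [Phi]
    rw [cutoff_add_smul]
    rw [show cutoff (dirV ⟨m, k⟩) m.2
        = Matrix.single (⟨k.1, k.2⟩ : Fin (m.1 + 1)) (⟨m.1, by omega⟩ : Fin (m.1 + 1)) 1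
      from cutoff_stdBasis_eq m.2 _ _ (by exact k.2) (by simp)]
    rw [core, hadj, ← hA]
  rw [hfun] at hcurve
  have hexp : HasDerivAt
      (fun t : ℂ => (-1 : ℂ) ^ (m.1 - k'.1 + 1) * (A.charpoly.coeff k'.1 - t * b))
      ((-1 : ℂ) ^ (m.1 - k'.1 + 1) * -(1 * b)) 0 :=
    (((hasDerivAt_id (0 : ℂ)).mul_const b).const_sub (A.charpoly.coeff k'.1)).const_mul _
  have := hexp.unique hcurve
  rw [← this, hb]
  ring

/-- Every element of `e + b` is strongly regular: the derivative of `Φ_n`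
at such a point is surjective. -/
theorem stmt1 (n : ℕ) (hn : 0 < n) (x : Matrix (Fin n) (Fin n) ℂ) (hx : InEB x) :
    StronglyRegular x := by
  classical
  set key : (Σ m : Fin n, Fin (m.1 + 1)) → ℕ :=
    fun q => q.1.1 * (n + 1) + (q.1.1 - q.2.1) with hkey
  have keylt : ∀ a b : ℕ, a < b → a * (n + 1) + n < b * (n + 1) := by
    intro a b hab
    have h1 : (a + 1) * (n + 1) ≤ b * (n + 1) := Nat.mul_le_mul_right _ hab
    have h2 : (a + 1) * (n + 1) = a * (n + 1) + (n + 1) := by ring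
    omega
  have hinj : Function.Injective key := by
    rintro ⟨⟨mv, hml⟩, k⟩ ⟨⟨m'v, hm'l⟩, k'⟩ h
    simp only [hkey] at h
    have hb1 : k.1 < mv + 1 := k.2
    have hb2 : k'.1 < m'v + 1 := k'.2
    rcases Nat.lt_trichotomy mv m'v with h1 | h1 | h1
    · have := keylt mv m'v h1
      omega
    · subst h1
      have hkk : k = k' := Fin.ext (by omega)
      subst hkk
      rfl
    · have := keylt m'v mv h1
      omega
  set u : (Σ m : Fin n, Fin (m.1 + 1)) → ((Σ m : Fin n, Fin (m.1 + 1)) → ℂ) :=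
    fun p => fderiv ℂ (Phi n) x (dirV p) with hu
  have hdiag : ∀ p, u p p ≠ 0 := by
    rintro ⟨m, k⟩
    rw [hu]
    simp only
    rw [comp_main hx m k k]
    have hcoeff : (cutoff x (show (k.1 : ℕ) ≤ n by
        have := k.2; have := m.2; omega)).charpoly.coeff k.1 = 1 := by
      have hdeg : (cutoff x (show (k.1 : ℕ) ≤ n by
          have := k.2; have := m.2; omega)).charpoly.natDegree = k.1 := by
        rw [Matrix.charpoly_natDegree_eq_dim, Fintype.card_fin]
      have hmon := (Matrix.charpoly_monic (cutoff x (show (k.1 : ℕ) ≤ n by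
        have := k.2; have := m.2; omega))).coeff_natDegree
      rwa [hdeg] at hmon
    rw [hcoeff, mul_one]
    refine neg_ne_zero.2 (mul_ne_zero (pow_ne_zero _ ?_) (pow_ne_zero _ ?_)) <;> norm_num
  have hzero : ∀ p q, key q < key p → u p q = 0 := by
    rintro ⟨⟨mv, hml⟩, k⟩ ⟨⟨m'v, hm'l⟩, k'⟩ hlt
    simp only [hkey, Fin.val_mk] at hlt
    have hb1 : k.1 < mv + 1 := k.2
    have hb2 : k'.1 < m'v + 1 := k'.2
    rcases Nat.lt_trichotomy m'v mv with hcase | hcase | hcase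
    · exact comp_kill x ⟨⟨mv, hml⟩, k⟩ ⟨⟨m'v, hm'l⟩, k'⟩ hcase
    · subst hcase
      have hkk : k.1 < k'.1 := by omega
      rw [hu]
      simp only
      rw [comp_main hx ⟨m'v, hml⟩ k k']
      have hcoeff : (cutoff x (show (k.1 : ℕ) ≤ n by omega)).charpoly.coeff k'.1 = 0 := by
        refine Polynomial.coeff_eq_zero_of_natDegree_lt ?_
        rw [Matrix.charpoly_natDegree_eq_dim, Fintype.card_fin]
        exact hkk
      rw [hcoeff]
      ring
    · have := keylt mv m'v hcase
      omega
  show Function.Surjective (fderiv ℂ (Phi n) x)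
  intro w
  have hmem := span_triangular key hinj u hdiag hzero w
  have hle : Submodule.span ℂ (Set.range u)
      ≤ LinearMap.range ((fderiv ℂ (Phi n) x : _) :
          Matrix (Fin n) (Fin n) ℂ →ₗ[ℂ] ((Σ m : Fin n, Fin (m.1 + 1)) → ℂ)) := by
    refine Submodule.span_le.2 ?_
    rintro _ ⟨p, rfl⟩
    exact ⟨dirV p, rfl⟩
  obtain ⟨y, hy⟩ := hle hmem
  exact ⟨y, hy⟩
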